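/- Let h be a singular hermitian inner product on a finite-dimensional complex vector space V. Then the dual function h* is again a singular hermitian inner product on the dual space V* = Hom_ℂ(V,ℂ), i.e. |·|_{h*} satisfies the homogeneity property, the triangle inequality, and the parallelogram law (with values in [0,+∞]). -/

import Mathlib

noncomputable section

open MeasureTheory ENNReal Metric Complex Filter Classical

/-- A singular hermitian inner product on a complex vector space `V`: a length function
`V → [0,+∞]` satisfying homogeneity, the triangle inequality and the parallelogram law. -/
structure SingularHermitianInnerProduct (V : Type*) [AddCommGroup V] [Module ℂ V] where
  norm : V → ℝ≥0∞
  norm_zero : norm 0 = 0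
  norm_smul : ∀ c : ℂ, c ≠ 0 → ∀ v : V, norm (c • v) = ENNReal.ofReal ‖c‖ * norm v
  triangle : ∀ v w : V, norm (v + w) ≤ norm v + norm w
  parallelogram : ∀ v w : V,
    norm (v + w) ^ 2 + norm (v - w) ^ 2 = 2 * norm v ^ 2 + 2 * norm w ^ 2

namespace SingularHermitianInnerProduct

variable {V : Type*} [AddCommGroup V] [Module ℂ V]

/-- `h` is positive definite if only `0` has length zero. -/
def PosDef (h : SingularHermitianInnerProduct V) : Prop := ∀ v : V, h.norm v = 0 → v = 0

/-- `h` is finite if no vector has infinite length. -/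
def Finite (h : SingularHermitianInnerProduct V) : Prop := ∀ v : V, h.norm v ≠ ⊤

/-- The dual length function on linear functionals (evaluated here on plain functions):
`|f|_{h*} = sup { |f v| / |v|_h : |v|_h ≠ 0 }`, where a fraction with denominator `+∞` is
zero, and with the convention that if every vector has length `0` then `|f|_{h*}` is `0`
for `f = 0` and `+∞` otherwise. -/
def dualNorm (h : SingularHermitianInnerProduct V) (f : V → ℂ) : ℝ≥0∞ :=
  if ∀ v : V, h.norm v = 0 then (if ∀ v : V, f v = 0 then 0 else ⊤)
  else ⨆ v : {v : V // h.norm v ≠ 0}, ENNReal.ofReal ‖f v.1‖ / h.norm v.1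

end SingularHermitianInnerProduct

open SingularHermitianInnerProduct


section Aux

variable {V : Type*} [AddCommGroup V] [Module ℂ V]

namespace SingularHermitianInnerProduct

lemma norm_neg'' (h : SingularHermitianInnerProduct V) (v : V) : h.norm (-v) = h.norm v := by
  have := h.norm_smul (-1) (by norm_num) v
  simpa using this

lemma norm_add_zero' (h : SingularHermitianInnerProduct V) {z : V} (hz : h.norm z = 0)
    (v : V) : h.norm (v + z) = h.norm v := by
  refine le_antisymm ?_ ?_
  · simpa [hz] using h.triangle v z
  · have := h.triangle (v + z) (-z)
    simpa [h.norm_neg'' z, hz] using this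

/-- The subspace of vectors of zero length. -/
def zeroSub (h : SingularHermitianInnerProduct V) : Submodule ℂ V where
  carrier := {v | h.norm v = 0}
  zero_mem' := h.norm_zero
  add_mem' := by
    intro a b ha hb
    have := h.triangle a b
    simp only [Set.mem_setOf_eq] at ha hb ⊢
    simpa [ha, hb, le_zero_iff] using this
  smul_mem' := by
    intro c v hv
    simp only [Set.mem_setOf_eq] at hv ⊢
    rcases eq_or_ne c 0 with rfl | hc
    · simpa using h.norm_zero
    · rw [h.norm_smul c hc, hv, mul_zero]

/-- The subspace of vectors of finite length. -/
def finSub (h : SingularHermitianInnerProduct V) : Submodule ℂ V where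
  carrier := {v | h.norm v ≠ ⊤}
  zero_mem' := by simp [h.norm_zero]
  add_mem' := by
    intro a b ha hb
    simp only [Set.mem_setOf_eq] at ha hb ⊢
    exact ne_top_of_le_ne_top (by simp [ha, hb, ENNReal.add_ne_top]) (h.triangle a b)
  smul_mem' := by
    intro c v hv
    simp only [Set.mem_setOf_eq] at hv ⊢
    rcases eq_or_ne c 0 with rfl | hc
    · simp [h.norm_zero]
    · rw [h.norm_smul c hc]
      exact ENNReal.mul_ne_top ENNReal.ofReal_ne_top hv

lemma dualNorm_eq_iSup (h : SingularHermitianInnerProduct V)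
    (hall : ¬ ∀ v : V, h.norm v = 0) (f : V → ℂ) :
    h.dualNorm f = ⨆ v : {v : V // h.norm v ≠ 0}, ENNReal.ofReal ‖f v.1‖ / h.norm v.1 := by
  rw [dualNorm, if_neg hall]

lemma dualNorm_zero (h : SingularHermitianInnerProduct V) : h.dualNorm 0 = 0 := by
  by_cases hall : ∀ v : V, h.norm v = 0
  · rw [dualNorm, if_pos hall]
    simp
  · rw [h.dualNorm_eq_iSup hall]
    simp

lemma dualNorm_add_le (h : SingularHermitianInnerProduct V) (f g : V → ℂ) :
    h.dualNorm (f + g) ≤ h.dualNorm f + h.dualNorm g := by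
  by_cases hall : ∀ v : V, h.norm v = 0
  · rw [dualNorm, if_pos hall]
    split_ifs with hfg
    · exact zero_le
    · have : (¬ ∀ v : V, f v = 0) ∨ ¬ ∀ v : V, g v = 0 := by
        by_contra hc
        push_neg at hc
        exact hfg fun v => by simp [Pi.add_apply, hc.1 v, hc.2 v]
      rcases this with hf | hf
      · have he : h.dualNorm f = ⊤ := by rw [dualNorm, if_pos hall, if_neg hf]
        rw [he]
        simp
      · have he : h.dualNorm g = ⊤ := by rw [dualNorm, if_pos hall, if_neg hf]
        rw [he]
        simp
  · rw [h.dualNorm_eq_iSup hall, h.dualNorm_eq_iSup hall, h.dualNorm_eq_iSup hall]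
    refine iSup_le fun v => ?_
    have h1 : ENNReal.ofReal ‖(f + g) v.1‖ / h.norm v.1 ≤
        ENNReal.ofReal ‖f v.1‖ / h.norm v.1 + ENNReal.ofReal ‖g v.1‖ / h.norm v.1 := by
      rw [← ENNReal.add_div]
      refine ENNReal.div_le_div_right ?_ _
      refine le_trans (ENNReal.ofReal_le_ofReal (norm_add_le _ _)) ?_
      exact le_of_eq (ENNReal.ofReal_add (norm_nonneg _) (norm_nonneg _))
    exact h1.trans (add_le_add (le_iSup (fun v : {v : V // h.norm v ≠ 0} =>
      ENNReal.ofReal ‖f v.1‖ / h.norm v.1) v) (le_iSup (fun v : {v : V // h.norm v ≠ 0} =>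
      ENNReal.ofReal ‖g v.1‖ / h.norm v.1) v))

lemma dualNorm_smul (h : SingularHermitianInnerProduct V) {c : ℂ} (hc : c ≠ 0) (f : V → ℂ) :
    h.dualNorm (c • f) = ENNReal.ofReal ‖c‖ * h.dualNorm f := by
  have hc' : ENNReal.ofReal ‖c‖ ≠ 0 := by
    simp [ENNReal.ofReal_eq_zero, not_le, norm_pos_iff, hc]
  by_cases hall : ∀ v : V, h.norm v = 0
  · rw [dualNorm, dualNorm, if_pos hall, if_pos hall]
    have hiff : (∀ v : V, (c • f) v = 0) ↔ ∀ v : V, f v = 0 := by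
      constructor
      · intro hv v
        have := hv v
        simp only [Pi.smul_apply, smul_eq_mul, mul_eq_zero] at this
        tauto
      · intro hv v
        simp [Pi.smul_apply, hv v]
    split_ifs with h1 h2 h2
    · simp
    · exact absurd (hiff.1 h1) h2
    · exact absurd (hiff.2 h2) h1
    · rw [ENNReal.mul_top hc']
  · rw [h.dualNorm_eq_iSup hall, h.dualNorm_eq_iSup hall, ENNReal.mul_iSup]
    refine iSup_congr fun v => ?_
    rw [Pi.smul_apply, smul_eq_mul, norm_mul,
      ENNReal.ofReal_mul (norm_nonneg c), mul_div_assoc]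

end SingularHermitianInnerProduct

end Aux

section Par

open ENNReal

set_option maxHeartbeats 2000000 in
lemma dualNorm_parallelogram {V : Type*} [AddCommGroup V] [Module ℂ V]
    [FiniteDimensional ℂ V] (h : SingularHermitianInnerProduct V) (f g : V →ₗ[ℂ] ℂ) :
    h.dualNorm ⇑(f + g) ^ 2 + h.dualNorm ⇑(f - g) ^ 2 =
      2 * h.dualNorm ⇑f ^ 2 + 2 * h.dualNorm ⇑g ^ 2 := by
  have htop2 : (⊤ : ℝ≥0∞) ^ 2 = ⊤ := ENNReal.top_pow (by norm_num)
  by_cases hall : ∀ v : V, h.norm v = 0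
  · -- every vector has length zero
    simp only [dualNorm, if_pos hall]
    by_cases hf0 : ∀ v : V, f v = 0 <;> by_cases hg0 : ∀ v : V, g v = 0
    · rw [if_pos, if_pos, if_pos hf0, if_pos hg0]
      · simp
      · intro v; simp [LinearMap.sub_apply, hf0 v, hg0 v]
      · intro v; simp [LinearMap.add_apply, hf0 v, hg0 v]
    · rw [if_neg, if_neg, if_pos hf0, if_neg hg0]
      · simp [htop2]
      · intro hc
        exact hg0 fun v => by
          have := hc v
          simpa [LinearMap.sub_apply, hf0 v] using this
      · intro hc
        exact hg0 fun v => by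
          have := hc v
          simpa [LinearMap.add_apply, hf0 v] using this
    · rw [if_neg, if_neg, if_neg hf0, if_pos hg0]
      · simp [htop2]
      · intro hc
        exact hf0 fun v => by
          have := hc v
          simpa [LinearMap.sub_apply, hg0 v] using this
      · intro hc
        exact hf0 fun v => by
          have := hc v
          simpa [LinearMap.add_apply, hg0 v] using this
    · have hkey : (¬ ∀ v : V, (f + g) v = 0) ∨ ¬ ∀ v : V, (f - g) v = 0 := by
        by_contra hc
        push_neg at hc
        obtain ⟨h1, h2⟩ := hc
        refine hf0 fun v => ?_
        have e1 := h1 v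
        have e2 := h2 v
        simp only [LinearMap.add_apply, LinearMap.sub_apply] at e1 e2
        have : f v - g v = 0 := e2
        rw [sub_eq_zero] at this
        rw [this] at e1
        exact this.trans (add_self_eq_zero.mp e1)
      rw [if_neg hf0, if_neg hg0]
      rcases hkey with hk | hk
      · rw [if_neg hk]
        simp [htop2]
      · rw [if_neg hk]
        simp [htop2]
  · by_cases hex : ∃ w : V, h.norm w ≠ 0 ∧ h.norm w ≠ ⊤
    swap
    · -- every vector has length 0 or ∞ : the dual norm vanishes identically
      push_neg at hex
      have hz : ∀ φ : V → ℂ, h.dualNorm φ = 0 := by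
        intro φ
        rw [h.dualNorm_eq_iSup hall]
        refine le_antisymm (iSup_le fun v => ?_) zero_le
        rw [hex v.1 v.2, ENNReal.div_top]
      rw [hz, hz, hz, hz]; simp
    obtain ⟨w0, hw00, hw0t⟩ := hex
    classical
    -- choose a complement of the null vectors inside the finite vectors
    set N : Submodule ℂ (h.finSub) := (h.zeroSub).comap (h.finSub).subtype with hN
    obtain ⟨U', hU'⟩ := N.exists_isCompl
    set U : Submodule ℂ V := U'.map (h.finSub).subtype with hUdef
    have hUfin : ∀ u : U, h.norm (u : V) ≠ ⊤ := by
      rintro ⟨-, x, hx, rfl⟩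
      exact x.2
    have hUzero : ∀ u : U, h.norm (u : V) = 0 → u = 0 := by
      rintro ⟨-, x, hx, rfl⟩ h0
      have hxN : x ∈ N := by
        rw [hN, Submodule.mem_comap]
        exact h0
      have hx0 : x = 0 := by
        have := hU'.disjoint.le_bot (Submodule.mem_inf.mpr ⟨hxN, hx⟩)
        simpa using this
      apply Subtype.ext
      simp [hx0]
    letI : NormedAddCommGroup U := AddGroupNorm.toNormedAddCommGroup
      { toFun := fun u => (h.norm (u : V)).toReal
        map_zero' := by simp [h.norm_zero]
        add_le' := by
          intro a b
          have ht := h.triangle (a : V) (b : V)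
          have hfin : h.norm (a : V) + h.norm (b : V) ≠ ⊤ :=
            ENNReal.add_ne_top.mpr ⟨hUfin a, hUfin b⟩
          have : (h.norm ((a : V) + (b : V))).toReal ≤
              (h.norm (a : V) + h.norm (b : V)).toReal := ENNReal.toReal_mono hfin ht
          rw [ENNReal.toReal_add (hUfin a) (hUfin b)] at this
          simpa using this
        neg' := by
          intro a
          simp [h.norm_neg'']
        eq_zero_of_map_eq_zero' := by
          intro a ha
          refine hUzero a ?_
          rcases ENNReal.toReal_eq_zero_iff _ |>.mp ha with h0 | h0
          · exact h0
          · exact absurd h0 (hUfin a) }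
    have hnorm : ∀ u : U, ‖u‖ = (h.norm (u : V)).toReal := fun _ => rfl
    have hsmul : ∀ (c : ℂ) (u : U), ‖c • u‖ ≤ ‖c‖ * ‖u‖ := by
      intro c u
      rcases eq_or_ne c 0 with rfl | hc
      · simp
      · have hcoe : ((c • u : U) : V) = c • (u : V) := rfl
        rw [hnorm, hnorm, hcoe, h.norm_smul c hc, ENNReal.toReal_mul,
          ENNReal.toReal_ofReal (norm_nonneg c)]
    letI : NormedSpace ℂ U :=
      { (inferInstance : Module ℂ U) with norm_smul_le := hsmul }
    letI : InnerProductSpace ℂ U := by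
      have key : ∀ x y : U, ‖x + y‖ * ‖x + y‖ + ‖x - y‖ * ‖x - y‖ =
          2 * (‖x‖ * ‖x‖ + ‖y‖ * ‖y‖) := ?_
      · exact InnerProductSpace.ofNorm (𝕜 := ℂ) key
      intro x y
      have hp := h.parallelogram (x : V) (y : V)
      have h1 : h.norm ((x : V) + (y : V)) ≠ ⊤ := hUfin (x + y)
      have h2 : h.norm ((x : V) - (y : V)) ≠ ⊤ := hUfin (x - y)
      have h3 : h.norm (x : V) ≠ ⊤ := hUfin x
      have h4 : h.norm (y : V) ≠ ⊤ := hUfin y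
      have e := congrArg ENNReal.toReal hp
      rw [ENNReal.toReal_add (by simp [ENNReal.pow_ne_top h1]) (by simp [ENNReal.pow_ne_top h2]),
        ENNReal.toReal_add
          (by exact ENNReal.mul_ne_top (by simp) (by simp [ENNReal.pow_ne_top h3]))
          (by exact ENNReal.mul_ne_top (by simp) (by simp [ENNReal.pow_ne_top h4])),
        ENNReal.toReal_mul, ENNReal.toReal_mul, ENNReal.toReal_pow, ENNReal.toReal_pow,
        ENNReal.toReal_pow, ENNReal.toReal_pow, ENNReal.toReal_ofNat] at e
      have hxy : ((x + y : U) : V) = (x : V) + (y : V) := rfl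
      have hxy' : ((x - y : U) : V) = (x : V) - (y : V) := rfl
      rw [hnorm, hnorm, hnorm, hnorm, hxy, hxy']
      linear_combination e
    haveI : FiniteDimensional ℂ U := by exact inferInstance
    haveI : CompleteSpace U := FiniteDimensional.complete ℂ U
    set F : (V →ₗ[ℂ] ℂ) → (U →L[ℂ] ℂ) :=
      fun φ => LinearMap.toContinuousLinearMap (φ.domRestrict U) with hF
    have hFapp : ∀ (φ : V →ₗ[ℂ] ℂ) (u : U), F φ u = φ (u : V) := fun φ u => rfl
    -- Key fact A: the dual norm of a functional vanishing on null vectors is the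
    -- operator norm of its restriction to `U`.
    have keyA : ∀ φ : V →ₗ[ℂ] ℂ, (∀ z : V, h.norm z = 0 → φ z = 0) →
        h.dualNorm ⇑φ = ENNReal.ofReal ‖F φ‖ := by
      intro φ hφ0
      rw [h.dualNorm_eq_iSup hall]
      have hle : (⨆ v : {v : V // h.norm v ≠ 0}, ENNReal.ofReal ‖φ v.1‖ / h.norm v.1)
          ≤ ENNReal.ofReal ‖F φ‖ := by
        refine iSup_le fun v => ?_
        by_cases hvt : h.norm v.1 = ⊤
        · rw [hvt, ENNReal.div_top]
          exact zero_le
        · obtain ⟨n, u, hnN, huU, hnu⟩ :=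
            Submodule.codisjoint_iff_exists_add_eq.mp hU'.codisjoint (⟨v.1, hvt⟩ : h.finSub)
          have hv_eq : v.1 = (n : V) + (u : V) := by
            have := congrArg Subtype.val hnu
            simpa using this.symm
          have hn0 : h.norm (n : V) = 0 := by
            have := hnN
            rw [hN, Submodule.mem_comap] at this
            exact this
          have huUmem : (u : V) ∈ U := ⟨u, huU, rfl⟩
          have hφv : φ v.1 = φ (u : V) := by
            rw [hv_eq, map_add, hφ0 _ hn0, zero_add]
          have hnv : h.norm v.1 = h.norm (u : V) := by
            rw [hv_eq, add_comm]
            exact h.norm_add_zero' hn0 _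
          have hub : h.norm ((u : V)) ≠ ⊤ := u.2
          rw [ENNReal.div_le_iff v.2 hvt, hφv, hnv]
          calc ENNReal.ofReal ‖φ (u : V)‖
              = ENNReal.ofReal ‖F φ ⟨(u : V), huUmem⟩‖ := by rw [hFapp]
            _ ≤ ENNReal.ofReal (‖F φ‖ * ‖(⟨(u : V), huUmem⟩ : U)‖) :=
                ENNReal.ofReal_le_ofReal ((F φ).le_opNorm _)
            _ = ENNReal.ofReal ‖F φ‖ * ENNReal.ofReal ‖(⟨(u : V), huUmem⟩ : U)‖ :=
                ENNReal.ofReal_mul (norm_nonneg _)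
            _ = ENNReal.ofReal ‖F φ‖ * h.norm (u : V) := by
                rw [hnorm ⟨(u : V), huUmem⟩, ENNReal.ofReal_toReal hub]
      refine le_antisymm hle ?_
      set S := ⨆ v : {v : V // h.norm v ≠ 0}, ENNReal.ofReal ‖φ v.1‖ / h.norm v.1 with hS
      have hSne : S ≠ ⊤ := (hle.trans_lt ENNReal.ofReal_lt_top).ne
      have hb : ∀ u : U, ‖F φ u‖ ≤ S.toReal * ‖u‖ := by
        intro u
        by_cases hu0 : h.norm (u : V) = 0
        · rw [hUzero u hu0]
          simp
        · have hterm : ENNReal.ofReal ‖φ (u : V)‖ / h.norm (u : V) ≤ S :=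
            le_iSup (fun v : {v : V // h.norm v ≠ 0} =>
              ENNReal.ofReal ‖φ v.1‖ / h.norm v.1) (⟨(u : V), hu0⟩ : {v : V // h.norm v ≠ 0})
          rw [ENNReal.div_le_iff hu0 (hUfin u)] at hterm
          have hmono := ENNReal.toReal_mono (ENNReal.mul_ne_top hSne (hUfin u)) hterm
          rw [ENNReal.toReal_ofReal (norm_nonneg _), ENNReal.toReal_mul] at hmono
          rw [hFapp, hnorm]
          exact hmono
      have hop : ‖F φ‖ ≤ S.toReal := (F φ).opNorm_le_bound ENNReal.toReal_nonneg hb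
      calc ENNReal.ofReal ‖F φ‖ ≤ ENNReal.ofReal S.toReal := ENNReal.ofReal_le_ofReal hop
        _ = S := ENNReal.ofReal_toReal hSne
    -- Key fact B: a functional not vanishing on some null vector has infinite dual norm.
    have keyB : ∀ φ : V →ₗ[ℂ] ℂ, (∃ z : V, h.norm z = 0 ∧ φ z ≠ 0) →
        h.dualNorm ⇑φ = ⊤ := by
      rintro φ ⟨z, hz0, hz1⟩
      rw [h.dualNorm_eq_iSup hall, iSup_eq_top]
      intro b hb
      have hφz : (0 : ℝ) < ‖φ z‖ := norm_pos_iff.mpr hz1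
      set t : ℝ := (b.toReal * (h.norm w0).toReal + ‖φ w0‖ + 1) / ‖φ z‖ with htdef
      have htpos : 0 < t := by
        apply div_pos _ hφz
        positivity
      have htz : h.norm ((t : ℂ) • z) = 0 := by
        rw [h.norm_smul _ (by exact_mod_cast htpos.ne'), hz0, mul_zero]
      have hvt : h.norm (w0 + (t : ℂ) • z) = h.norm w0 := h.norm_add_zero' htz w0
      refine ⟨⟨w0 + (t : ℂ) • z, by rw [hvt]; exact hw00⟩, ?_⟩
      have hlow : t * ‖φ z‖ - ‖φ w0‖ ≤ ‖φ (w0 + (t : ℂ) • z)‖ := by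
        have h1 : ‖(t : ℂ) * φ z‖ ≤ ‖φ w0 + (t : ℂ) * φ z‖ + ‖φ w0‖ := by
          calc ‖(t : ℂ) * φ z‖ = ‖(φ w0 + (t : ℂ) * φ z) - φ w0‖ := by congr 1; ring
            _ ≤ ‖φ w0 + (t : ℂ) * φ z‖ + ‖φ w0‖ := norm_sub_le _ _
        have h2 : ‖(t : ℂ) * φ z‖ = t * ‖φ z‖ := by
          rw [norm_mul, Complex.norm_real, Real.norm_eq_abs, abs_of_pos htpos]
        have h3 : φ (w0 + (t : ℂ) • z) = φ w0 + (t : ℂ) * φ z := by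
          simp [smul_eq_mul]
        rw [h3]
        linarith [h1, h2.symm.le]
      have htv : t * ‖φ z‖ - ‖φ w0‖ = b.toReal * (h.norm w0).toReal + 1 := by
        rw [htdef, div_mul_cancel₀ _ hφz.ne']
        ring
      have hstrict : b.toReal * (h.norm w0).toReal < ‖φ (w0 + (t : ℂ) • z)‖ := by
        nlinarith [hlow, htv]
      show b < ENNReal.ofReal ‖φ (w0 + (t : ℂ) • z)‖ / h.norm (w0 + (t : ℂ) • z)
      rw [hvt, ENNReal.lt_div_iff_mul_lt (Or.inl hw00) (Or.inl hw0t)]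
      calc b * h.norm w0 = ENNReal.ofReal (b.toReal * (h.norm w0).toReal) := by
            rw [ENNReal.ofReal_mul ENNReal.toReal_nonneg, ENNReal.ofReal_toReal hb.ne,
              ENNReal.ofReal_toReal hw0t]
        _ < ENNReal.ofReal ‖φ (w0 + (t : ℂ) • z)‖ := by
            rw [ENNReal.ofReal_lt_ofReal_iff (lt_of_le_of_lt (by positivity) hstrict)]
            exact hstrict
    -- now split according to whether f and g vanish on null vectors
    by_cases hf0 : ∀ z : V, h.norm z = 0 → f z = 0
    · by_cases hg0 : ∀ z : V, h.norm z = 0 → g z = 0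
      · have hfg1 : ∀ z : V, h.norm z = 0 → (f + g) z = 0 := fun z hz => by
          simp [LinearMap.add_apply, hf0 z hz, hg0 z hz]
        have hfg2 : ∀ z : V, h.norm z = 0 → (f - g) z = 0 := fun z hz => by
          simp [LinearMap.sub_apply, hf0 z hz, hg0 z hz]
        rw [keyA _ hfg1, keyA _ hfg2, keyA _ hf0, keyA _ hg0]
        have hFadd : F (f + g) = F f + F g := by
          ext u
          simp only [ContinuousLinearMap.add_apply, hFapp, LinearMap.add_apply]
        have hFsub : F (f - g) = F f - F g := by
          ext u
          simp only [ContinuousLinearMap.sub_apply, hFapp, LinearMap.sub_apply]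
        rw [hFadd, hFsub]
        set T := (InnerProductSpace.toDual ℂ U).symm with hT
        have hTn : ∀ A : U →L[ℂ] ℂ, ‖A‖ = ‖T A‖ := fun A =>
          (LinearIsometryEquiv.norm_map _ A).symm
        have hpar := parallelogram_law_with_norm ℂ (T (F f)) (T (F g))
        have hadd : T (F f + F g) = T (F f) + T (F g) := map_add T _ _
        have hsub : T (F f - F g) = T (F f) - T (F g) := map_sub T _ _
        have hreal : ‖F f + F g‖ ^ 2 + ‖F f - F g‖ ^ 2 =
            2 * ‖F f‖ ^ 2 + 2 * ‖F g‖ ^ 2 := by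
          rw [hTn (F f + F g), hTn (F f - F g), hTn (F f), hTn (F g), hadd, hsub]
          nlinarith [hpar]
        rw [← ENNReal.ofReal_pow (norm_nonneg _), ← ENNReal.ofReal_pow (norm_nonneg _),
          ← ENNReal.ofReal_pow (norm_nonneg _), ← ENNReal.ofReal_pow (norm_nonneg _),
          ← ENNReal.ofReal_add (by positivity) (by positivity)]
        have h2 : (2 : ℝ≥0∞) = ENNReal.ofReal 2 := (ENNReal.ofReal_ofNat 2).symm
        rw [h2, ← ENNReal.ofReal_mul (by norm_num), ← ENNReal.ofReal_mul (by norm_num),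
          ← ENNReal.ofReal_add (by positivity) (by positivity)]
        exact congrArg ENNReal.ofReal (by linarith [hreal])
      · push_neg at hg0
        obtain ⟨z, hz0, hz1⟩ := hg0
        have e1 : h.dualNorm ⇑(f + g) = ⊤ := keyB _ ⟨z, hz0, by
          simp [LinearMap.add_apply, hf0 z hz0, hz1]⟩
        have e2 : h.dualNorm ⇑g = ⊤ := keyB _ ⟨z, hz0, hz1⟩
        rw [e1, e2, htop2]
        simp
    · push_neg at hf0
      obtain ⟨z, hz0, hz1⟩ := hf0
      have e2 : h.dualNorm ⇑f = ⊤ := keyB _ ⟨z, hz0, hz1⟩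
      have hkey : (f + g) z ≠ 0 ∨ (f - g) z ≠ 0 := by
        by_contra hc
        push_neg at hc
        obtain ⟨h1, h2⟩ := hc
        apply hz1
        have e1 : f z + g z = 0 := h1
        have e2' : f z - g z = 0 := h2
        have : f z + f z = 0 := by linear_combination e1 + e2'
        exact add_self_eq_zero.mp this
      rw [e2, htop2]
      rcases hkey with hk | hk
      · rw [keyB _ ⟨z, hz0, hk⟩, htop2]
        simp
      · rw [keyB _ ⟨z, hz0, hk⟩, htop2]
        simp

end Par

/-- The dual function of a singular hermitian inner product on a
finite-dimensional complex vector space `V` is again a singular hermitian inner product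
on the dual space `V* = Hom_ℂ(V, ℂ)`: it satisfies homogeneity, the triangle inequality,
and the parallelogram law. -/
theorem dualNorm_singularHermitian {V : Type*} [AddCommGroup V] [Module ℂ V]
    [FiniteDimensional ℂ V] (h : SingularHermitianInnerProduct V) :
    ∃ hstar : SingularHermitianInnerProduct (V →ₗ[ℂ] ℂ),
      ∀ f : V →ₗ[ℂ] ℂ, hstar.norm f = h.dualNorm f := by
  refine ⟨{ norm := fun φ => h.dualNorm ⇑φ
            norm_zero := by
              show h.dualNorm ⇑(0 : V →ₗ[ℂ] ℂ) = 0
              have hc : ⇑(0 : V →ₗ[ℂ] ℂ) = (0 : V → ℂ) := rfl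
              rw [hc, h.dualNorm_zero]
            norm_smul := by
              intro c hc φ
              show h.dualNorm ⇑(c • φ) = ENNReal.ofReal ‖c‖ * h.dualNorm ⇑φ
              have hcoe : ⇑(c • φ) = c • ⇑φ := rfl
              rw [hcoe, h.dualNorm_smul hc]
            triangle := by
              intro φ ψ
              show h.dualNorm ⇑(φ + ψ) ≤ h.dualNorm ⇑φ + h.dualNorm ⇑ψ
              have hcoe : ⇑(φ + ψ) = ⇑φ + ⇑ψ := rfl
              rw [hcoe]
              exact h.dualNorm_add_le ⇑φ ⇑ψ
            parallelogram := by
              intro φ ψ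
              show h.dualNorm ⇑(φ + ψ) ^ 2 + h.dualNorm ⇑(φ - ψ) ^ 2 =
                2 * h.dualNorm ⇑φ ^ 2 + 2 * h.dualNorm ⇑ψ ^ 2
              exact dualNorm_parallelogram h φ ψ }, fun f => rfl⟩
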